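/- arXiv:2302.11537 — 2 statements merged into one kernel-verified Lean document; each statement's English description precedes it below -/
import Mathlib

section
/- The join operation on topological spaces is associative up to homeomorphism for compact Hausdorff spaces: (X * Y) * Z is homeomorphic to X * (Y * Z). -/
open unitInterval Topology Set

section QuotLemmas
variable {A : Type*} [TopologicalSpace A]

lemma quot_compactSpace [CompactSpace A] (r : A → A → Prop) : CompactSpace (Quot r) := by
  constructor
  have : univ = range (Quot.mk r) := (Set.range_eq_univ.mpr (Quot.exists_rep)).symm
  rw [this]
  exact isCompact_range continuous_quot_mk

lemma quot_isClosedMap [CompactSpace A] [T2Space A] {r : A → A → Prop}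
    (h : IsClosed {p : A × A | Relation.EqvGen r p.1 p.2}) : IsClosedMap (Quot.mk r) := by
  intro C hC
  rw [← isQuotientMap_quot_mk.isClosed_preimage]
  have : Quot.mk r ⁻¹' (Quot.mk r '' C) =
      Prod.fst '' ({p : A × A | Relation.EqvGen r p.1 p.2} ∩ univ ×ˢ C) := by
    ext a
    simp only [mem_preimage, mem_image, mem_inter_iff, mem_setOf_eq, mem_prod, mem_univ,
      true_and, Prod.exists]
    constructor
    · rintro ⟨c, hc, hmk⟩
      exact ⟨a, c, ⟨Quot.eq.mp hmk.symm, hc⟩, rfl⟩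
    · rintro ⟨a', c, ⟨hrel, hc⟩, rfl⟩
      exact ⟨c, hc, (Quot.eq.mpr hrel).symm⟩
  rw [this]
  exact (((h.inter (isClosed_univ.prod hC)).isCompact).image continuous_fst).isClosed

lemma quot_t2 [CompactSpace A] [T2Space A] {r : A → A → Prop}
    (h : IsClosed {p : A × A | Relation.EqvGen r p.1 p.2}) : T2Space (Quot r) := by
  constructor
  intro u v huv
  obtain ⟨a, rfl⟩ := Quot.exists_rep u
  obtain ⟨b, rfl⟩ := Quot.exists_rep v
  have hCa : IsClosed {c | Relation.EqvGen r a c} := by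
    have : {c | Relation.EqvGen r a c} = (fun c => (a, c)) ⁻¹' {p : A × A | Relation.EqvGen r p.1 p.2} := rfl
    rw [this]; exact h.preimage (by continuity)
  have hCb : IsClosed {c | Relation.EqvGen r b c} := by
    have : {c | Relation.EqvGen r b c} = (fun c => (b, c)) ⁻¹' {p : A × A | Relation.EqvGen r p.1 p.2} := rfl
    rw [this]; exact h.preimage (by continuity)
  have hdisj : Disjoint {c | Relation.EqvGen r a c} {c | Relation.EqvGen r b c} := by
    rw [Set.disjoint_left]
    intro c hac hbc
    exact huv (Quot.eq.mpr (hac.trans _ _ _ (hbc.symm _ _)))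
  obtain ⟨U, V, hU, hV, haU, hbV, hUV⟩ := normal_separation hCa hCb hdisj
  refine ⟨(Quot.mk r '' Uᶜ)ᶜ, (Quot.mk r '' Vᶜ)ᶜ, (quot_isClosedMap h _ hU.isClosed_compl).isOpen_compl,
    (quot_isClosedMap h _ hV.isClosed_compl).isOpen_compl, ?_, ?_, ?_⟩
  · rintro ⟨c, hc, hmk⟩
    exact hc (haU (Quot.eq.mp hmk.symm))
  · rintro ⟨c, hc, hmk⟩
    exact hc (hbV (Quot.eq.mp hmk.symm))
  · rw [Set.disjoint_left]
    rintro w hw1 hw2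
    obtain ⟨c, rfl⟩ := Quot.exists_rep w
    have hcU : c ∈ U := by_contra fun hc => hw1 ⟨c, hc, rfl⟩
    have hcV : c ∈ V := by_contra fun hc => hw2 ⟨c, hc, rfl⟩
    exact hUV.le_bot ⟨hcU, hcV⟩

end QuotLemmas


/-- The join relation on `X × Y × [0,1]`: identify `(x, y, 0) ~ (x, y', 0)` and
`(x, y, 1) ~ (x', y, 1)`. -/
def JoinRel (X Y : Type*) : X × Y × I → X × Y × I → Prop := fun p q =>
  (p.2.2 = 0 ∧ q.2.2 = 0 ∧ p.1 = q.1) ∨ (p.2.2 = 1 ∧ q.2.2 = 1 ∧ p.2.1 = q.2.1)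

/-- The topological join `X * Y`. -/
def TopJoin (X Y : Type*) : Type _ := Quot (JoinRel X Y)

instance (X Y : Type*) [TopologicalSpace X] [TopologicalSpace Y] :
    TopologicalSpace (TopJoin X Y) :=
  inferInstanceAs (TopologicalSpace (Quot _))

section JR
variable {X Y : Type*}

lemma joinRel_symm {p q : X × Y × I} (h : JoinRel X Y p q) : JoinRel X Y q p := by
  rcases h with ⟨h1, h2, h3⟩ | ⟨h1, h2, h3⟩
  · exact Or.inl ⟨h2, h1, h3.symm⟩
  · exact Or.inr ⟨h2, h1, h3.symm⟩

lemma joinRel_trans {p q s : X × Y × I} (h : JoinRel X Y p q) (h' : JoinRel X Y q s) :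
    JoinRel X Y p s := by
  rcases h with ⟨h1, h2, h3⟩ | ⟨h1, h2, h3⟩ <;> rcases h' with ⟨g1, g2, g3⟩ | ⟨g1, g2, g3⟩
  · exact Or.inl ⟨h1, g2, h3.trans g3⟩
  · exact absurd (h2.symm.trans g1) zero_ne_one
  · exact absurd (g1.symm.trans h2) zero_ne_one
  · exact Or.inr ⟨h1, g2, h3.trans g3⟩

lemma eqvGen_joinRel {p q : X × Y × I} :
    Relation.EqvGen (JoinRel X Y) p q ↔ JoinRel X Y p q ∨ p = q := by
  constructor
  · intro h
    induction h with
    | rel a b hab => exact Or.inl hab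
    | refl a => exact Or.inr rfl
    | symm a b _ ih =>
      rcases ih with h | rfl
      · exact Or.inl (joinRel_symm h)
      · exact Or.inr rfl
    | trans a b c _ _ ih1 ih2 =>
      rcases ih1 with h1 | rfl
      · rcases ih2 with h2 | rfl
        · exact Or.inl (joinRel_trans h1 h2)
        · exact Or.inl h1
      · exact ih2
  · rintro (h | rfl)
    · exact Relation.EqvGen.rel _ _ h
    · exact Relation.EqvGen.refl _

lemma topJoin_mk_eq {p q : X × Y × I} :
    Quot.mk (JoinRel X Y) p = Quot.mk (JoinRel X Y) q ↔ JoinRel X Y p q ∨ p = q := by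
  rw [Quot.eq, eqvGen_joinRel]

variable [TopologicalSpace X] [TopologicalSpace Y] [T2Space X] [T2Space Y]

lemma joinRel_isClosed :
    IsClosed {p : (X × Y × I) × (X × Y × I) | Relation.EqvGen (JoinRel X Y) p.1 p.2} := by
  have : {p : (X × Y × I) × (X × Y × I) | Relation.EqvGen (JoinRel X Y) p.1 p.2} =
      ({p | p.1.2.2 = 0} ∩ {p | p.2.2.2 = 0} ∩ {p | p.1.1 = p.2.1}) ∪
      ({p | p.1.2.2 = 1} ∩ {p | p.2.2.2 = 1} ∩ {p | p.1.2.1 = p.2.2.1}) ∪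
      {p | p.1 = p.2} := by
    ext p
    rw [mem_setOf_eq, eqvGen_joinRel]
    simp only [mem_union, mem_inter_iff, mem_setOf_eq, JoinRel]
    constructor
    · rintro ((⟨h1, h2, h3⟩ | ⟨h1, h2, h3⟩) | h)
      · exact Or.inl (Or.inl ⟨⟨h1, h2⟩, h3⟩)
      · exact Or.inl (Or.inr ⟨⟨h1, h2⟩, h3⟩)
      · exact Or.inr h
    · rintro ((⟨⟨h1, h2⟩, h3⟩ | ⟨⟨h1, h2⟩, h3⟩) | h)
      · exact Or.inl (Or.inl ⟨h1, h2, h3⟩)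
      · exact Or.inl (Or.inr ⟨h1, h2, h3⟩)
      · exact Or.inr h
  rw [this]
  have c1 : Continuous fun p : (X × Y × I) × (X × Y × I) => p.1.2.2 :=
    continuous_fst.snd.snd
  have c2 : Continuous fun p : (X × Y × I) × (X × Y × I) => p.2.2.2 :=
    continuous_snd.snd.snd
  have c3 : Continuous fun p : (X × Y × I) × (X × Y × I) => p.1.1 := continuous_fst.fst
  have c4 : Continuous fun p : (X × Y × I) × (X × Y × I) => p.2.1 := continuous_snd.fst
  have c5 : Continuous fun p : (X × Y × I) × (X × Y × I) => p.1.2.1 :=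
    continuous_fst.snd.fst
  have c6 : Continuous fun p : (X × Y × I) × (X × Y × I) => p.2.2.1 :=
    continuous_snd.snd.fst
  exact ((((isClosed_eq c1 continuous_const).inter (isClosed_eq c2 continuous_const)).inter
      (isClosed_eq c3 c4)).union
      (((isClosed_eq c1 continuous_const).inter (isClosed_eq c2 continuous_const)).inter
      (isClosed_eq c5 c6))).union (isClosed_eq continuous_fst continuous_snd)


noncomputable section
noncomputable section

def jsig (s t : I) : I := unitInterval.symm (unitInterval.symm s * unitInterval.symm t)

lemma jsig_coe (s t : I) : (jsig s t : ℝ) = s + t - s * t := by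
  simp only [jsig, coe_symm_eq, Set.Icc.coe_mul]
  ring

def jtau (s t : I) : I := projIcc 0 1 zero_le_one ((t : ℝ) / (jsig s t : ℝ))

lemma continuous_jsig : Continuous fun p : I × I => jsig p.1 p.2 := by
  rw [continuous_induced_rng]
  have : ((↑) ∘ fun p : I × I => jsig p.1 p.2) = fun p : I × I => ((p.1 : ℝ) + p.2 - p.1 * p.2) := by
    funext p
    exact jsig_coe p.1 p.2
  rw [this]
  fun_prop

lemma jsig_nonneg_aux (s t : I) : (t : ℝ) ≤ (jsig s t : ℝ) := by
  rw [jsig_coe]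
  nlinarith [s.2.1, s.2.2, t.2.1, t.2.2]

lemma jsig_eq_zero {s t : I} : jsig s t = 0 ↔ s = 0 ∧ t = 0 := by
  constructor
  · intro h
    have h' : (s : ℝ) + t - s * t = 0 := by rw [← jsig_coe, h]; simp
    have hs := s.2.1; have hs' := s.2.2; have ht := t.2.1; have ht' := t.2.2
    constructor <;> apply Subtype.ext <;> rw [Icc.coe_zero] <;> nlinarith
  · rintro ⟨rfl, rfl⟩
    apply Subtype.ext
    rw [jsig_coe]; simp

lemma jtau_coe {s t : I} (h : jsig s t ≠ 0) : (jtau s t : ℝ) = (t : ℝ) / (jsig s t : ℝ) := by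
  have hpos : (0 : ℝ) < jsig s t := by
    rcases lt_or_eq_of_le (jsig s t).2.1 with h' | h'
    · exact h'
    · exact absurd (Subtype.ext h'.symm) h
  rw [jtau, projIcc_of_mem]
  exact ⟨div_nonneg t.2.1 hpos.le, div_le_one_of_le₀ (jsig_nonneg_aux s t) hpos.le⟩

lemma jtau_of_zero {s t : I} (h : jsig s t = 0) : jtau s t = 0 := by
  rw [jtau, h]
  simp [projIcc]

lemma jsig_zero_right (s : I) : jsig s 0 = s := by
  apply Subtype.ext; rw [jsig_coe]; simp

lemma jsig_one_right (s : I) : jsig s 1 = 1 := by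
  apply Subtype.ext; rw [jsig_coe]; simp

lemma jsig_one_left (t : I) : jsig 1 t = 1 := by
  apply Subtype.ext; rw [jsig_coe]; simp

lemma jsig_zero_left (t : I) : jsig 0 t = t := by
  apply Subtype.ext; rw [jsig_coe]; simp

lemma jsig_eq_one {s t : I} : jsig s t = 1 ↔ s = 1 ∨ t = 1 := by
  constructor
  · intro h
    have h' : (s : ℝ) + t - s * t = 1 := by rw [← jsig_coe, h]; simp
    have : (1 - (s : ℝ)) * (1 - t) = 0 := by ring_nf; linarith
    rcases mul_eq_zero.mp this with h2 | h2
    · exact Or.inl (Subtype.ext (by rw [Icc.coe_one]; linarith))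
    · exact Or.inr (Subtype.ext (by rw [Icc.coe_one]; linarith))
  · rintro (rfl | rfl)
    · exact jsig_one_left t
    · exact jsig_one_right s

-- recover t from sig, tau
lemma jtau_mul {s t : I} (h : jsig s t ≠ 0) : (jtau s t : ℝ) * (jsig s t : ℝ) = t := by
  rw [jtau_coe h, div_mul_cancel₀]
  intro h0
  exact h (Subtype.ext h0)

lemma jtau_eq_zero {s t : I} : jtau s t = 0 ↔ t = 0 := by
  constructor
  · intro h
    by_cases h0 : jsig s t = 0
    · exact (jsig_eq_zero.mp h0).2
    · have := jtau_mul h0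
      rw [h] at this
      simp at this
      exact Subtype.ext this.symm
  · rintro rfl
    by_cases h0 : jsig s 0 = 0
    · exact jtau_of_zero h0
    · apply Subtype.ext
      rw [jtau_coe h0]
      simp

lemma jtau_eq_one {s t : I} (h : jtau s t = 1) : (t : ℝ) = jsig s t := by
  by_cases h0 : jsig s t = 0
  · rw [jtau_of_zero h0] at h
    exact absurd h zero_ne_one
  · have := jtau_mul h0
    rw [h] at this
    simp at this
    exact this.symm

lemma jtau_one_iff {s t : I} : jtau s t = 1 ↔ (s = 0 ∧ t ≠ 0) ∨ t = 1 := by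
  constructor
  · intro h
    have ht := jtau_eq_one h
    rw [jsig_coe] at ht
    have : (s : ℝ) * (1 - t) = 0 := by linarith
    rcases mul_eq_zero.mp this with h2 | h2
    · have hs : s = 0 := Subtype.ext (by simpa using h2)
      by_cases htz : t = 0
      · subst hs htz
        rw [jtau_of_zero (by rw [jsig_zero_left])] at h
        exact absurd h zero_ne_one
      · exact Or.inl ⟨hs, htz⟩
    · exact Or.inr (Subtype.ext (by rw [Icc.coe_one]; linarith))
  · rintro (⟨rfl, ht⟩ | rfl)
    · have h0 : jsig 0 t ≠ 0 := by rw [jsig_zero_left]; exact ht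
      apply Subtype.ext
      rw [jtau_coe h0, jsig_zero_left, div_self]
      · simp
      · intro hc; exact ht (Subtype.ext hc)
    · by_cases h0 : jsig s 1 = 0
      · exact absurd (jsig_eq_zero.mp h0).2 one_ne_zero
      · apply Subtype.ext
        rw [jtau_coe h0, jsig_one_right]
        simp



section Assoc
variable (X Y Z : Type*) [TopologicalSpace X] [TopologicalSpace Y] [TopologicalSpace Z]

instance topJoin.compactSpace [CompactSpace X] [CompactSpace Y] : CompactSpace (TopJoin X Y) :=
  quot_compactSpace _

instance topJoin.t2Space [CompactSpace X] [T2Space X] [CompactSpace Y] [T2Space Y] :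
    T2Space (TopJoin X Y) :=
  quot_t2 joinRel_isClosed

noncomputable def bigF : (X × Y × I) × Z × I → TopJoin X (TopJoin Y Z) := fun p =>
  Quot.mk (JoinRel X (TopJoin Y Z))
    (p.1.1, Quot.mk (JoinRel Y Z) (p.1.2.1, p.2.1, jtau p.1.2.2 p.2.2), jsig p.1.2.2 p.2.2)

variable {X Y Z}

lemma continuous_bigF [CompactSpace Y] [CompactSpace Z] : Continuous (bigF X Y Z) := by
  rw [continuous_iff_continuousAt]
  intro p
  have hsigc : Continuous fun r : (X × Y × I) × Z × I => jsig r.1.2.2 r.2.2 :=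
    continuous_jsig.comp (continuous_fst.snd.snd.prodMk continuous_snd.snd)
  by_cases h0 : jsig p.1.2.2 p.2.2 = 0
  · -- bad point: s = t = 0
    rw [ContinuousAt, (nhds_basis_opens (bigF X Y Z p)).tendsto_right_iff]
    rintro U ⟨hFU, hU⟩
    have hUopen : IsOpen (Quot.mk (JoinRel X (TopJoin Y Z)) ⁻¹' U) :=
      hU.preimage continuous_quot_mk
    have hsub : {p.1.1} ×ˢ ((univ : Set (TopJoin Y Z)) ×ˢ {(0 : I)}) ⊆
        Quot.mk (JoinRel X (TopJoin Y Z)) ⁻¹' U := by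
      rintro ⟨x, w, c⟩ ⟨hx, -, hc⟩
      rw [mem_singleton_iff] at hx hc
      subst hx; subst hc
      have heq : Quot.mk (JoinRel X (TopJoin Y Z)) (p.1.1, w, (0 : I)) = bigF X Y Z p :=
        Quot.sound (Or.inl ⟨rfl, h0, rfl⟩)
      have hFU' : bigF X Y Z p ∈ U := hFU
      rw [← heq] at hFU'
      exact hFU'
    obtain ⟨u, v, hu, hv, hx0u, hv0, huv⟩ := generalized_tube_lemma isCompact_singleton
      (isCompact_univ.prod isCompact_singleton) hUopen hsub
    obtain ⟨u', v', hu', hv', hunivu', h0v', hu'v'⟩ :=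
      generalized_tube_lemma isCompact_univ isCompact_singleton hv hv0
    have hmem : {r : (X × Y × I) × Z × I | r.1.1 ∈ u ∧ jsig r.1.2.2 r.2.2 ∈ v'} ∈ 𝓝 p := by
      refine IsOpen.mem_nhds ?_ ⟨hx0u rfl, by rw [h0]; exact h0v' rfl⟩
      exact (hu.preimage continuous_fst.fst).inter (hv'.preimage hsigc)
    filter_upwards [hmem] with r hr
    refine huv ?_
    exact ⟨hr.1, hu'v' ⟨hunivu' (mem_univ _), hr.2⟩⟩
  · -- good point
    have hsigR : ContinuousAt (fun r : (X × Y × I) × Z × I => (jsig r.1.2.2 r.2.2 : ℝ)) p :=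
      (continuous_subtype_val.comp hsigc).continuousAt
    have htR : Continuous fun r : (X × Y × I) × Z × I => (r.2.2 : ℝ) :=
      continuous_subtype_val.comp continuous_snd.snd
    have hne : (jsig p.1.2.2 p.2.2 : ℝ) ≠ 0 := fun hc => h0 (Subtype.ext hc)
    have htauc : ContinuousAt (fun r : (X × Y × I) × Z × I => jtau r.1.2.2 r.2.2) p := by
      have : ContinuousAt
          (fun r : (X × Y × I) × Z × I => (r.2.2 : ℝ) / (jsig r.1.2.2 r.2.2 : ℝ)) p :=
        htR.continuousAt.div hsigR hne
      exact (continuous_projIcc.continuousAt).comp this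
    refine (continuous_quot_mk.continuousAt).comp ?_
    refine ContinuousAt.prodMk continuous_fst.fst.continuousAt ?_
    refine ContinuousAt.prodMk ?_ hsigc.continuousAt
    refine (continuous_quot_mk.continuousAt).comp ?_
    exact ContinuousAt.prodMk continuous_fst.snd.fst.continuousAt
      (ContinuousAt.prodMk continuous_snd.fst.continuousAt htauc)

end Assoc

section Assoc2
variable {X Y Z : Type*} [TopologicalSpace X] [TopologicalSpace Y] [TopologicalSpace Z]

/-- recover `t` -/
lemma t_eq_of_eq {s t s' t' : I} (h0 : jsig s t ≠ 0) (hσ : jsig s t = jsig s' t')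
    (hτ : jtau s t = jtau s' t') : t = t' := by
  have h0' : jsig s' t' ≠ 0 := fun hc => h0 (hσ.trans hc)
  apply Subtype.ext
  rw [← jtau_mul h0, ← jtau_mul h0', hτ, hσ]

/-- recover `s` -/
lemma s_eq_of_eq {s t s' : I} (ht1 : t ≠ 1) (hσ : jsig s t = jsig s' t) : s = s' := by
  apply Subtype.ext
  have h := congrArg Subtype.val hσ
  rw [jsig_coe, jsig_coe] at h
  have h1 : (1 : ℝ) - t ≠ 0 := by
    intro hc
    exact ht1 (Subtype.ext (by rw [Icc.coe_one]; linarith))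
  have h2 : (s : ℝ) * (1 - t) = s' * (1 - t) := by ring_nf; ring_nf at h; linarith
  exact mul_right_cancel₀ h1 h2

/-- `q2` : the canonical map onto the left-associated join. -/
def q2 : (X × Y × I) × Z × I → TopJoin (TopJoin X Y) Z := fun p =>
  Quot.mk (JoinRel (TopJoin X Y) Z) (Quot.mk (JoinRel X Y) p.1, p.2)

lemma bigF_inj {p p' : (X × Y × I) × Z × I} (h : bigF X Y Z p = bigF X Y Z p') :
    q2 p = q2 p' := by
  obtain ⟨⟨x, y, s⟩, z, t⟩ := p
  obtain ⟨⟨x', y', s'⟩, z', t'⟩ := p'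
  rcases topJoin_mk_eq.mp h with (⟨hσ0, hσ0', hx⟩ | ⟨hσ1, hσ1', hw⟩) | heq
  · -- jsig = 0 on both sides, x = x'
    obtain ⟨hs, ht⟩ := jsig_eq_zero.mp hσ0
    obtain ⟨hs', ht'⟩ := jsig_eq_zero.mp hσ0'
    dsimp at hx hs ht hs' ht'
    subst hx hs ht hs' ht'
    have hinner : Quot.mk (JoinRel X Y) (x, y, (0:I)) = Quot.mk (JoinRel X Y) (x, y', (0:I)) :=
      Quot.sound (Or.inl ⟨rfl, rfl, rfl⟩)
    exact Quot.sound (Or.inl ⟨rfl, rfl, hinner⟩)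
  · -- jsig = 1 on both sides, inner classes equal
    dsimp at hσ1 hσ1' hw
    rcases topJoin_mk_eq.mp hw with (⟨hτ0, hτ0', hy⟩ | ⟨hτ1, hτ1', hz⟩) | heqin
    · -- jtau = 0 : t = 0, so s = 1
      dsimp at hτ0 hτ0' hy
      have ht : t = 0 := jtau_eq_zero.mp hτ0
      have ht' : t' = 0 := jtau_eq_zero.mp hτ0'
      subst ht ht' hy
      rw [jsig_zero_right] at hσ1 hσ1'
      subst hσ1 hσ1'
      have hinner : Quot.mk (JoinRel X Y) (x, y, (1:I)) = Quot.mk (JoinRel X Y) (x', y, (1:I)) :=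
        Quot.sound (Or.inr ⟨rfl, rfl, rfl⟩)
      exact Quot.sound (Or.inl ⟨rfl, rfl, hinner⟩)
    · -- jtau = 1 and jsig = 1 : t = 1
      dsimp at hτ1 hτ1' hz
      have ht : t = 1 := by
        apply Subtype.ext
        rw [Icc.coe_one, jtau_eq_one hτ1, hσ1, Icc.coe_one]
      have ht' : t' = 1 := by
        apply Subtype.ext
        rw [Icc.coe_one, jtau_eq_one hτ1', hσ1', Icc.coe_one]
      exact Quot.sound (Or.inr ⟨ht, ht', hz⟩)
    · -- inner components literally equal
      injection heqin with hy h2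
      injection h2 with hz hτ
      subst hy hz
      -- jsig = 1 both; t = jtau * 1
      have h0 : jsig s t ≠ 0 := by rw [hσ1]; exact one_ne_zero
      have ht : t = t' := t_eq_of_eq h0 (hσ1.trans hσ1'.symm) hτ
      subst ht
      by_cases ht1 : t = 1
      · exact Quot.sound (Or.inr ⟨ht1, ht1, rfl⟩)
      · have hs : s = 1 := (jsig_eq_one.mp hσ1).resolve_right ht1
        have hs' : s' = 1 := (jsig_eq_one.mp hσ1').resolve_right ht1
        subst hs hs'
        have hinner : Quot.mk (JoinRel X Y) (x, y, (1:I)) = Quot.mk (JoinRel X Y) (x', y, (1:I)) :=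
          Quot.sound (Or.inr ⟨rfl, rfl, rfl⟩)
        rw [q2, q2]
        exact congrArg _ (by rw [hinner])
  · -- outer components literally equal
    injection heq with hx h2
    injection h2 with hw hσ
    subst hx
    rcases topJoin_mk_eq.mp hw with (⟨hτ0, hτ0', hy⟩ | ⟨hτ1, hτ1', hz⟩) | heqin
    · -- jtau = 0 both : t = t' = 0, jsig = s
      dsimp at hτ0 hτ0' hy
      have ht : t = 0 := jtau_eq_zero.mp hτ0
      have ht' : t' = 0 := jtau_eq_zero.mp hτ0'
      subst ht ht' hy
      rw [jsig_zero_right, jsig_zero_right] at hσ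
      subst hσ
      exact Quot.sound (Or.inl ⟨rfl, rfl, rfl⟩)
    · -- jtau = 1 both, z = z'
      dsimp at hτ1 hτ1' hz
      subst hz
      by_cases h0 : jsig s t = 0
      · rw [jtau_of_zero h0] at hτ1
        exact absurd hτ1 zero_ne_one
      · have ht : t = t' := t_eq_of_eq h0 hσ (hτ1.trans hτ1'.symm)
        subst ht
        rcases jtau_one_iff.mp hτ1 with ⟨hs, htz⟩ | ht1
        · rcases jtau_one_iff.mp hτ1' with ⟨hs', -⟩ | ht1
          · subst hs hs'
            have hinner : Quot.mk (JoinRel X Y) (x, y, (0:I)) =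
                Quot.mk (JoinRel X Y) (x, y', (0:I)) := Quot.sound (Or.inl ⟨rfl, rfl, rfl⟩)
            rw [q2, q2]
            exact congrArg _ (by rw [hinner])
          · exact Quot.sound (Or.inr ⟨ht1, ht1, rfl⟩)
        · exact Quot.sound (Or.inr ⟨ht1, ht1, rfl⟩)
    · -- all equal
      injection heqin with hy h2
      injection h2 with hz hτ
      subst hy hz
      by_cases h0 : jsig s t = 0
      · obtain ⟨hs, ht⟩ := jsig_eq_zero.mp h0
        have h0' : jsig s' t' = 0 := by rw [← hσ]; exact h0
        obtain ⟨hs', ht'⟩ := jsig_eq_zero.mp h0'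
        subst hs ht hs' ht'
        rfl
      · have ht : t = t' := t_eq_of_eq h0 hσ hτ
        subst ht
        by_cases ht1 : t = 1
        · exact Quot.sound (Or.inr ⟨ht1, ht1, rfl⟩)
        · have hs : s = s' := s_eq_of_eq ht1 hσ
          subst hs
          rfl

end Assoc2

section Assoc3
variable {X Y Z : Type*} [TopologicalSpace X] [TopologicalSpace Y] [TopologicalSpace Z]

lemma bigF_surj (w : TopJoin X (TopJoin Y Z)) : ∃ p, bigF X Y Z p = w := by
  obtain ⟨⟨x, v, s⟩, rfl⟩ := Quot.exists_rep w
  obtain ⟨⟨y, z, t⟩, rfl⟩ := Quot.exists_rep v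
  by_cases hs0 : s = 0
  · refine ⟨((x, y, 0), z, 0), ?_⟩
    subst hs0
    refine Quot.sound (Or.inl ⟨?_, rfl, rfl⟩)
    show jsig 0 0 = 0
    rw [jsig_zero_left]
  · by_cases hst : s = 1 ∧ t = 1
    · obtain ⟨rfl, rfl⟩ := hst
      refine ⟨((x, y, 1), z, 1), ?_⟩
      have h1 : jsig (1:I) 1 = 1 := jsig_one_left 1
      have h2 : jtau (1:I) 1 = 1 := jtau_one_iff.mpr (Or.inr rfl)
      rw [bigF]
      dsimp only
      rw [h1, h2]
    · -- general case : 1 - s*t ≠ 0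
      have hden : (1 : ℝ) - s * t ≠ 0 := by
        intro hc
        have hs := s.2.1; have hs1 := s.2.2; have ht := t.2.1; have ht1 := t.2.2
        apply hst
        constructor <;> apply Subtype.ext <;> rw [Icc.coe_one] <;> nlinarith
      have hdenpos : (0 : ℝ) < 1 - s * t := by
        have hs := s.2.1; have hs1 := s.2.2; have ht := t.2.1; have ht1 := t.2.2
        rcases lt_or_eq_of_le (show (0:ℝ) ≤ 1 - s * t by nlinarith) with h | h
        · exact h
        · exact absurd h.symm hden
      have hmem : (s : ℝ) * (1 - t) / (1 - s * t) ∈ Icc (0:ℝ) 1 := by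
        have hs := s.2.1; have hs1 := s.2.2; have ht := t.2.1; have ht1 := t.2.2
        constructor
        · apply div_nonneg (by nlinarith) hdenpos.le
        · rw [div_le_one hdenpos]; nlinarith
      set s₁ : I := ⟨(s : ℝ) * (1 - t) / (1 - s * t), hmem⟩ with hs₁
      have hσ : jsig s₁ (s * t) = s := by
        apply Subtype.ext
        rw [jsig_coe]
        show (s : ℝ) * (1 - t) / (1 - s * t) + (s * t : I) -
          (s : ℝ) * (1 - t) / (1 - s * t) * (s * t : I) = s
        rw [Icc.coe_mul]
        field_simp
        ring
      have hσ0 : jsig s₁ (s * t) ≠ 0 := by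
        rw [hσ]; exact hs0
      have hτ : jtau s₁ (s * t) = t := by
        apply Subtype.ext
        rw [jtau_coe hσ0, hσ, Icc.coe_mul]
        rw [mul_comm, mul_div_assoc, div_self (fun hc => hs0 (Subtype.ext hc)), mul_one]
      refine ⟨((x, y, s₁), z, s * t), ?_⟩
      rw [bigF]
      dsimp only
      rw [hσ, hτ]

lemma bigF_respects_inner (a b : X × Y × I) (c : Z × I) (hab : JoinRel X Y a b) :
    bigF X Y Z (a, c) = bigF X Y Z (b, c) := by
  obtain ⟨x, y, s⟩ := a
  obtain ⟨x', y', s'⟩ := b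
  obtain ⟨z, t⟩ := c
  rcases hab with ⟨hs, hs', hx⟩ | ⟨hs, hs', hy⟩
  · dsimp at hs hs' hx
    subst hs hs' hx
    by_cases ht0 : t = 0
    · subst ht0
      refine Quot.sound (Or.inl ⟨?_, ?_, rfl⟩) <;>
        · show jsig 0 0 = 0
          rw [jsig_zero_left]
    · have hτ : jtau 0 t = 1 := jtau_one_iff.mpr (Or.inl ⟨rfl, ht0⟩)
      have hinner : Quot.mk (JoinRel Y Z) (y, z, jtau 0 t) = Quot.mk (JoinRel Y Z) (y', z, jtau 0 t) := by
        rw [hτ]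
        exact Quot.sound (Or.inr ⟨rfl, rfl, rfl⟩)
      rw [bigF, bigF]
      dsimp only
      rw [hinner]
  · dsimp at hs hs' hy
    subst hs hs' hy
    exact Quot.sound (Or.inr ⟨jsig_one_left t, jsig_one_left t, rfl⟩)

/-- the once-lifted map -/
noncomputable def gmid : (TopJoin X Y) × Z × I → TopJoin X (TopJoin Y Z) := fun w =>
  Quot.liftOn w.1 (fun a => bigF X Y Z (a, w.2)) (fun a b hab => bigF_respects_inner a b w.2 hab)

lemma gmid_respects (w w' : (TopJoin X Y) × Z × I) (h : JoinRel (TopJoin X Y) Z w w') :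
    gmid w = gmid w' := by
  obtain ⟨u, z, t⟩ := w
  obtain ⟨u', z', t'⟩ := w'
  rcases h with ⟨ht, ht', hu⟩ | ⟨ht, ht', hz⟩
  · dsimp at ht ht' hu
    subst ht ht' hu
    induction u using Quot.ind with
    | mk a =>
      obtain ⟨x, y, s⟩ := a
      show bigF X Y Z ((x, y, s), z, 0) = bigF X Y Z ((x, y, s), z', 0)
      have hτ : jtau s 0 = 0 := jtau_eq_zero.mpr rfl
      have hinner : Quot.mk (JoinRel Y Z) (y, z, jtau s 0) =
          Quot.mk (JoinRel Y Z) (y, z', jtau s 0) := by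
        rw [hτ]
        exact Quot.sound (Or.inl ⟨rfl, rfl, rfl⟩)
      rw [bigF, bigF]
      dsimp only
      rw [hinner]
  · dsimp at ht ht' hz
    subst ht ht' hz
    induction u using Quot.ind with
    | mk a =>
      induction u' using Quot.ind with
      | mk b =>
        obtain ⟨x, y, s⟩ := a
        obtain ⟨x', y', s'⟩ := b
        show bigF X Y Z ((x, y, s), z, 1) = bigF X Y Z ((x', y', s'), z, 1)
        have hτ : jtau s 1 = 1 := jtau_one_iff.mpr (Or.inr rfl)
        have hτ' : jtau s' 1 = 1 := jtau_one_iff.mpr (Or.inr rfl)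
        have hinner : Quot.mk (JoinRel Y Z) (y, z, jtau s 1) =
            Quot.mk (JoinRel Y Z) (y', z, jtau s' 1) := by
          rw [hτ, hτ']
          exact Quot.sound (Or.inr ⟨rfl, rfl, rfl⟩)
        refine Quot.sound (Or.inr ⟨jsig_one_right s, jsig_one_right s', ?_⟩)
        exact hinner

/-- the associativity map -/
noncomputable def assocMap : TopJoin (TopJoin X Y) Z → TopJoin X (TopJoin Y Z) :=
  Quot.lift gmid gmid_respects

lemma assocMap_q2 (p : (X × Y × I) × Z × I) : assocMap (q2 p) = bigF X Y Z p := rfl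

lemma q2_surjective : Function.Surjective (q2 (X := X) (Y := Y) (Z := Z)) := by
  intro w
  obtain ⟨⟨u, z, t⟩, rfl⟩ := Quot.exists_rep w
  obtain ⟨a, rfl⟩ := Quot.exists_rep u
  exact ⟨(a, z, t), rfl⟩

lemma assocMap_bijective : Function.Bijective (assocMap (X := X) (Y := Y) (Z := Z)) := by
  constructor
  · intro u v h
    obtain ⟨p, rfl⟩ := q2_surjective u
    obtain ⟨p', rfl⟩ := q2_surjective v
    rw [assocMap_q2, assocMap_q2] at h
    exact bigF_inj h
  · intro w
    obtain ⟨p, hp⟩ := bigF_surj w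
    exact ⟨q2 p, hp⟩

lemma isQuotientMap_q2 [CompactSpace X] [T2Space X] [CompactSpace Y] [T2Space Y]
    [CompactSpace Z] [T2Space Z] :
    IsQuotientMap (q2 (X := X) (Y := Y) (Z := Z)) := by
  haveI : T2Space (Quot (JoinRel X Y)) := topJoin.t2Space X Y
  have h1 : IsProperMap ((Quot.mk (JoinRel X Y) : X × Y × I → TopJoin X Y)) :=
    Continuous.isProperMap continuous_quot_mk
  have h2 : IsProperMap
      (Prod.map (Quot.mk (JoinRel X Y) : X × Y × I → TopJoin X Y) (id : Z × I → Z × I)) :=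
    h1.prodMap isProperMap_id
  have hsurj : Function.Surjective
      (Prod.map (Quot.mk (JoinRel X Y) : X × Y × I → TopJoin X Y) (id : Z × I → Z × I)) :=
    Function.Surjective.prodMap Quot.exists_rep Function.surjective_id
  have h3 : IsQuotientMap
      (Prod.map (Quot.mk (JoinRel X Y) : X × Y × I → TopJoin X Y) (id : Z × I → Z × I)) :=
    h2.isClosedMap.isQuotientMap h2.continuous hsurj
  exact isQuotientMap_quot_mk.comp h3

lemma continuous_assocMap [CompactSpace X] [T2Space X] [CompactSpace Y] [T2Space Y]
    [CompactSpace Z] [T2Space Z] :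
    Continuous (assocMap (X := X) (Y := Y) (Z := Z)) := by
  rw [isQuotientMap_q2.continuous_iff]
  exact continuous_bigF

end Assoc3

/-- The join is associative up to homeomorphism for compact Hausdorff spaces. -/
theorem topJoin_assoc (X Y Z : Type) [TopologicalSpace X] [TopologicalSpace Y]
    [TopologicalSpace Z] [CompactSpace X] [T2Space X] [CompactSpace Y] [T2Space Y]
    [CompactSpace Z] [T2Space Z] :
    Nonempty (TopJoin (TopJoin X Y) Z ≃ₜ TopJoin X (TopJoin Y Z)) := by
  exact ⟨Continuous.homeoOfEquivCompactToT2
    (f := Equiv.ofBijective assocMap assocMap_bijective) continuous_assocMap⟩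
end
end
end JR
end

section
/- The join of two connected compact spaces, each containing at least one point, is simply connected. -/
open unitInterval Topology

set_option linter.unusedSectionVars false

noncomputable section

namespace TopJoinAux

open CategoryTheory FundamentalGroupoid
open scoped FundamentalGroupoid

attribute [local instance] Path.Homotopic.setoid

variable {X Y : Type} [TopologicalSpace X] [TopologicalSpace Y]

/-- The quotient map onto the join. -/
abbrev jq (z : X × Y × I) : TopJoin X Y := Quot.mk (JoinRel X Y) z

lemma continuous_jq : Continuous (jq : X × Y × I → TopJoin X Y) := continuous_quot_mk

lemma isQuotientMap_jq : IsQuotientMap (jq : X × Y × I → TopJoin X Y) := isQuotientMap_quot_mk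

lemma jq_zero (x : X) (y y' : Y) : jq (x, y, 0) = jq (x, y', 0) :=
  Quot.sound (Or.inl ⟨rfl, rfl, rfl⟩)

lemma jq_one (x x' : X) (y : Y) : jq (x, y, 1) = jq (x', y, 1) :=
  Quot.sound (Or.inr ⟨rfl, rfl, rfl⟩)

/-- The height coordinate on the join. -/
def tc : TopJoin X Y → ℝ :=
  Quot.lift (fun z => (z.2.2 : ℝ)) <| by
    rintro z z' (⟨h1, h2, -⟩ | ⟨h1, h2, -⟩) <;> (show (z.2.2 : ℝ) = z'.2.2; rw [h1, h2])

lemma continuous_tc : Continuous (tc : TopJoin X Y → ℝ) :=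
  continuous_quot_lift _ (by fun_prop)

@[simp] lemma tc_jq (z : X × Y × I) : tc (jq z) = z.2.2 := rfl

lemma tc_mem (p : TopJoin X Y) : tc p ∈ Set.Icc (0 : ℝ) 1 := by
  induction p using Quot.ind with
  | _ z => exact z.2.2.2

variable (X Y) in
/-- The open set `t < 1`. -/
def UU : Set (TopJoin X Y) := {p | tc p < 1}

variable (X Y) in
/-- The open set `t > 0`. -/
def VV : Set (TopJoin X Y) := {p | 0 < tc p}

lemma isOpen_UU : IsOpen (UU X Y) := isOpen_lt continuous_tc continuous_const
lemma isOpen_VV : IsOpen (VV X Y) := isOpen_lt continuous_const continuous_tc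

lemma mem_UU_or_VV (p : TopJoin X Y) : p ∈ UU X Y ∨ p ∈ VV X Y := by
  rcases lt_or_ge (tc p) 1 with h | h
  · exact Or.inl h
  · exact Or.inr (lt_of_lt_of_le one_pos h)

/-- Descending a continuous map along the quotient, restricted to an open set. -/
lemma descend_cont {Z : Type*} [TopologicalSpace Z] {W : Set (TopJoin X Y)} (hW : IsOpen W)
    (h : X × Y × I → Z) (hc : Continuous h)
    (compat : ∀ z z', jq z = jq z' → jq (X := X) z ∈ W → h z = h z') :
    ∃ g : W → Z, Continuous g ∧ ∀ z (hz : jq z ∈ W), g ⟨jq z, hz⟩ = h z := by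
  classical
  have key : ∀ z : X × Y × I, jq (X := X) z ∈ W → h (jq z).out = h z := by
    intro z hz
    refine compat _ _ (Quot.out_eq (jq z)) ?_
    show Quot.mk (JoinRel X Y) (Quot.out (jq z)) ∈ W
    rw [Quot.out_eq]; exact hz
  refine ⟨fun p => h p.1.out, ?_, fun z hz => key z hz⟩
  rw [continuous_def]
  intro O hO
  have hT : IsOpen {j : TopJoin X Y | j ∈ W ∧ h j.out ∈ O} := by
    rw [← isQuotientMap_jq.isOpen_preimage]
    have : jq (X := X) ⁻¹' {j | j ∈ W ∧ h j.out ∈ O} = jq ⁻¹' W ∩ h ⁻¹' O := by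
      ext z
      simp only [Set.mem_preimage, Set.mem_setOf_eq, Set.mem_inter_iff]
      exact and_congr_right fun hz => by rw [key z hz]
    rw [this]
    exact (hW.preimage continuous_jq).inter (hO.preimage hc)
  have : (fun p : W => h p.1.out) ⁻¹' O =
      Subtype.val ⁻¹' {j : TopJoin X Y | j ∈ W ∧ h j.out ∈ O} := by
    ext p
    simp [p.2]
  rw [this]
  exact hT.preimage continuous_subtype_val

end TopJoinAux
namespace TopJoinAux

open CategoryTheory FundamentalGroupoid
open scoped FundamentalGroupoid

attribute [local instance] Path.Homotopic.setoid

variable {X Y : Type} [TopologicalSpace X] [TopologicalSpace Y]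

lemma jq_congr {x x' : X} {y y' : Y} {t t' : I} (hx : x = x') (hy : y = y')
    (hv : (t : ℝ) = (t' : ℝ)) : jq (x, y, t) = jq (x', y', t') := by
  subst hx; subst hy
  exact congrArg (fun s : I => jq (x, y, s)) (Subtype.ext hv)

section Contractions

variable (x₀ : X) (y₀ : Y)

/-- Contraction of `{t < 1}` inside the join: first push `t` to `0`, then rise to the
point `(x₀, y₀, 1)` along the `y₀` cone line. -/
def kU (z : X × Y × I) (u : I) : TopJoin X Y :=
  if (u : ℝ) ≤ 1 / 2 then
    jq (z.1, z.2.1, ⟨max 0 ((1 - 2 * u) * z.2.2), by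
      constructor
      · exact le_max_left _ _
      · refine max_le zero_le_one ?_
        have h1 := u.2.1; have h2 := (z.2.2).2.1; have h3 := (z.2.2).2.2
        nlinarith⟩)
  else
    jq (z.1, y₀, ⟨max 0 (2 * u - 1), by
      constructor
      · exact le_max_left _ _
      · refine max_le zero_le_one ?_
        have := u.2.2; linarith⟩)

lemma continuous_kU : Continuous (fun p : (X × Y × I) × I => kU y₀ p.1 p.2) := by
  unfold kU
  apply Continuous.if_le
  · apply continuous_jq.comp
    refine (continuous_fst.comp continuous_fst).prodMk (Continuous.prodMk ?_ ?_)
    · exact (continuous_fst.comp (continuous_snd.comp continuous_fst))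
    · refine Continuous.subtype_mk ?_ _
      fun_prop
  · apply continuous_jq.comp
    refine (continuous_fst.comp continuous_fst).prodMk (Continuous.prodMk continuous_const ?_)
    refine Continuous.subtype_mk ?_ _
    fun_prop
  · fun_prop
  · exact continuous_const
  · intro p hp
    refine (jq_congr rfl rfl (t' := 0) ?_).trans
      ((jq_zero p.1.1 p.1.2.1 y₀).trans (jq_congr rfl rfl (t' := 0) ?_).symm)
    · show max (0:ℝ) _ = ((0:I):ℝ)
      rw [hp]; norm_num
    · show max (0:ℝ) _ = ((0:I):ℝ)
      rw [hp]; norm_num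

lemma kU_zero (z : X × Y × I) : kU y₀ z 0 = jq z := by
  unfold kU
  rw [if_pos (by norm_num)]
  refine jq_congr rfl rfl ?_
  show max (0:ℝ) ((1 - 2 * ((0:I):ℝ)) * z.2.2) = (z.2.2 : ℝ)
  have h0 : ((0:I):ℝ) = 0 := rfl
  rw [h0]
  rw [mul_zero, sub_zero, one_mul]
  exact max_eq_right (z.2.2).2.1

lemma kU_one (z : X × Y × I) : kU y₀ z 1 = jq (x₀, y₀, 1) := by
  unfold kU
  rw [if_neg (by norm_num)]
  refine (jq_congr rfl rfl (t' := 1) ?_).trans (jq_one z.1 x₀ y₀)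
  show max (0:ℝ) (2 * ((1:I):ℝ) - 1) = ((1:I):ℝ)
  norm_num

lemma kU_compat : ∀ z z' : X × Y × I, Relation.EqvGen (JoinRel X Y) z z' →
    z.2.2 = z'.2.2 ∧ (z.2.2 ≠ 1 → ∀ u, kU y₀ z u = kU y₀ z' u) := by
  intro z z' h
  induction h with
  | rel a b hab =>
    rcases hab with ⟨h1, h2, h3⟩ | ⟨h1, h2, h3⟩
    · refine ⟨h1.trans h2.symm, fun _ u => ?_⟩
      unfold kU
      split_ifs with hu
      · refine (jq_congr rfl rfl (t' := 0) ?_).trans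
          (((jq_zero a.1 a.2.1 b.2.1).trans (by rw [h3])).trans (jq_congr rfl rfl (t' := 0) ?_).symm)
        · show max (0:ℝ) ((1 - 2 * (u:ℝ)) * a.2.2) = ((0:I):ℝ)
          rw [h1]; norm_num
        · show max (0:ℝ) ((1 - 2 * (u:ℝ)) * b.2.2) = ((0:I):ℝ)
          rw [h2]; norm_num
      · rw [h3]
    · exact ⟨h1.trans h2.symm, fun hne => absurd h1 hne⟩
  | refl a => exact ⟨rfl, fun _ _ => rfl⟩
  | symm a b _ ih =>
    refine ⟨ih.1.symm, fun hne u => (ih.2 ?_ u).symm⟩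
    rwa [← ih.1] at hne
  | trans a b c _ _ ih₁ ih₂ =>
    refine ⟨ih₁.1.trans ih₂.1, fun hne u => (ih₁.2 hne u).trans (ih₂.2 ?_ u)⟩
    rwa [ih₁.1] at hne

lemma tc_ne_one {z : X × Y × I} (h : jq (X := X) z ∈ UU X Y) : z.2.2 ≠ 1 := by
  intro he
  have : tc (jq z) < 1 := h
  rw [tc_jq, he] at this
  simp at this

/-- The subset `{t < 1}` contracts, inside the join, to the point `(x₀, y₀, 1)`. -/
lemma exists_contraction_U :
    Nonempty (ContinuousMap.Homotopy
      (⟨Subtype.val, continuous_subtype_val⟩ : C(UU X Y, TopJoin X Y))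
      (ContinuousMap.const _ (jq (x₀, y₀, 1)))) := by
  classical
  set Kc : C((X × Y × I) × I, TopJoin X Y) := ⟨fun p => kU y₀ p.1 p.2, continuous_kU y₀⟩ with hKc
  obtain ⟨g, hg, hgev⟩ := descend_cont (X := X) (Y := Y) isOpen_UU (fun z => Kc.curry z)
    Kc.curry.continuous (by
      intro z z' hq hmem
      have hcc := kU_compat y₀ z z' (Quot.eq.mp hq)
      show Kc.curry z = Kc.curry z'
      ext u
      exact hcc.2 (tc_ne_one hmem) u)
  refine ⟨⟨⟨fun p => g p.2 p.1, ?_⟩, ?_, ?_⟩⟩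
  · exact (ContinuousMap.uncurry ⟨g, hg⟩).continuous.comp
      (continuous_snd.prodMk continuous_fst)
  · intro p
    obtain ⟨j, hj⟩ := p
    revert hj
    induction j using Quot.ind with
    | _ z =>
      intro hz
      show g ⟨jq z, hz⟩ 0 = jq z
      rw [hgev z hz]
      exact kU_zero y₀ z
  · intro p
    obtain ⟨j, hj⟩ := p
    revert hj
    induction j using Quot.ind with
    | _ z =>
      intro hz
      show g ⟨jq z, hz⟩ 1 = jq (x₀, y₀, 1)
      rw [hgev z hz]
      exact kU_one x₀ y₀ z

end Contractions

end TopJoinAux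
namespace TopJoinAux

open CategoryTheory FundamentalGroupoid
open scoped FundamentalGroupoid

attribute [local instance] Path.Homotopic.setoid

variable {X Y : Type} [TopologicalSpace X] [TopologicalSpace Y]

section ContractionsV

variable (x₀ : X) (y₀ : Y)

/-- Contraction of `{t > 0}` inside the join: first push `t` to `1`, then descend to the
point `(x₀, y₀, 0)` along the `x₀` cone line. -/
def kV (z : X × Y × I) (u : I) : TopJoin X Y :=
  if (u : ℝ) ≤ 1 / 2 then
    jq (z.1, z.2.1, ⟨min 1 (z.2.2 + 2 * u * (1 - z.2.2)), by
      constructor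
      · refine le_min zero_le_one ?_
        have h1 := u.2.1; have h2 := (z.2.2).2.1; have h3 := (z.2.2).2.2
        nlinarith
      · exact min_le_left _ _⟩)
  else
    jq (x₀, z.2.1, ⟨min 1 (2 - 2 * u), by
      constructor
      · refine le_min zero_le_one ?_
        have := u.2.2; linarith
      · exact min_le_left _ _⟩)

lemma continuous_kV : Continuous (fun p : (X × Y × I) × I => kV x₀ p.1 p.2) := by
  unfold kV
  apply Continuous.if_le
  · apply continuous_jq.comp
    refine (continuous_fst.comp continuous_fst).prodMk (Continuous.prodMk ?_ ?_)
    · exact (continuous_fst.comp (continuous_snd.comp continuous_fst))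
    · refine Continuous.subtype_mk ?_ _
      fun_prop
  · apply continuous_jq.comp
    refine continuous_const.prodMk (Continuous.prodMk ?_ ?_)
    · exact (continuous_fst.comp (continuous_snd.comp continuous_fst))
    · refine Continuous.subtype_mk ?_ _
      fun_prop
  · fun_prop
  · exact continuous_const
  · intro p hp
    refine (jq_congr rfl rfl (t' := 1) ?_).trans
      ((jq_one p.1.1 x₀ p.1.2.1).trans (jq_congr rfl rfl (t' := 1) ?_).symm)
    · show min (1:ℝ) _ = ((1:I):ℝ)
      rw [hp]
      have h2 := (p.1.2.2).2.1; have h3 := (p.1.2.2).2.2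
      show min (1:ℝ) (p.1.2.2 + 2 * (1/2) * (1 - p.1.2.2)) = 1
      rw [show (p.1.2.2:ℝ) + 2 * (1/2) * (1 - p.1.2.2) = 1 by ring]
      norm_num
    · show min (1:ℝ) _ = ((1:I):ℝ)
      rw [hp]
      norm_num

lemma kV_zero (z : X × Y × I) : kV x₀ z 0 = jq z := by
  unfold kV
  rw [if_pos (by norm_num)]
  refine jq_congr rfl rfl ?_
  show min (1:ℝ) ((z.2.2 : ℝ) + 2 * ((0:I):ℝ) * (1 - z.2.2)) = (z.2.2 : ℝ)
  have h0 : ((0:I):ℝ) = 0 := rfl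
  rw [h0, mul_zero, zero_mul, add_zero]
  exact min_eq_right (z.2.2).2.2

lemma kV_one (z : X × Y × I) : kV x₀ z 1 = jq (x₀, y₀, 0) := by
  unfold kV
  rw [if_neg (by norm_num)]
  refine (jq_congr rfl rfl (t' := 0) ?_).trans (jq_zero x₀ z.2.1 y₀)
  show min (1:ℝ) (2 - 2 * ((1:I):ℝ)) = ((0:I):ℝ)
  norm_num

lemma kV_compat : ∀ z z' : X × Y × I, Relation.EqvGen (JoinRel X Y) z z' →
    z.2.2 = z'.2.2 ∧ (z.2.2 ≠ 0 → ∀ u, kV x₀ z u = kV x₀ z' u) := by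
  intro z z' h
  induction h with
  | rel a b hab =>
    rcases hab with ⟨h1, h2, h3⟩ | ⟨h1, h2, h3⟩
    · exact ⟨h1.trans h2.symm, fun hne => absurd h1 hne⟩
    · refine ⟨h1.trans h2.symm, fun _ u => ?_⟩
      unfold kV
      split_ifs with hu
      · refine (jq_congr rfl rfl (t' := 1) ?_).trans
          (((jq_one a.1 b.1 a.2.1).trans (by rw [h3])).trans (jq_congr rfl rfl (t' := 1) ?_).symm)
        · show min (1:ℝ) ((a.2.2:ℝ) + 2 * (u:ℝ) * (1 - a.2.2)) = ((1:I):ℝ)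
          rw [h1]
          show min (1:ℝ) (((1:I):ℝ) + 2 * (u:ℝ) * (1 - ((1:I):ℝ))) = ((1:I):ℝ)
          norm_num
        · show min (1:ℝ) ((b.2.2:ℝ) + 2 * (u:ℝ) * (1 - b.2.2)) = ((1:I):ℝ)
          rw [h2]
          show min (1:ℝ) (((1:I):ℝ) + 2 * (u:ℝ) * (1 - ((1:I):ℝ))) = ((1:I):ℝ)
          norm_num
      · rw [h3]
  | refl a => exact ⟨rfl, fun _ _ => rfl⟩
  | symm a b _ ih =>
    refine ⟨ih.1.symm, fun hne u => (ih.2 ?_ u).symm⟩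
    rwa [← ih.1] at hne
  | trans a b c _ _ ih₁ ih₂ =>
    refine ⟨ih₁.1.trans ih₂.1, fun hne u => (ih₁.2 hne u).trans (ih₂.2 ?_ u)⟩
    rwa [ih₁.1] at hne

lemma tc_ne_zero {z : X × Y × I} (h : jq (X := X) z ∈ VV X Y) : z.2.2 ≠ 0 := by
  intro he
  have : 0 < tc (jq z) := h
  rw [tc_jq, he] at this
  simp at this

/-- The subset `{t > 0}` contracts, inside the join, to the point `(x₀, y₀, 0)`. -/
lemma exists_contraction_V :
    Nonempty (ContinuousMap.Homotopy
      (⟨Subtype.val, continuous_subtype_val⟩ : C(VV X Y, TopJoin X Y))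
      (ContinuousMap.const _ (jq (x₀, y₀, 0)))) := by
  classical
  set Kc : C((X × Y × I) × I, TopJoin X Y) := ⟨fun p => kV x₀ p.1 p.2, continuous_kV x₀⟩ with hKc
  obtain ⟨g, hg, hgev⟩ := descend_cont (X := X) (Y := Y) isOpen_VV (fun z => Kc.curry z)
    Kc.curry.continuous (by
      intro z z' hq hmem
      have hcc := kV_compat x₀ z z' (Quot.eq.mp hq)
      show Kc.curry z = Kc.curry z'
      ext u
      exact hcc.2 (tc_ne_zero hmem) u)
  refine ⟨⟨⟨fun p => g p.2 p.1, ?_⟩, ?_, ?_⟩⟩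
  · exact (ContinuousMap.uncurry ⟨g, hg⟩).continuous.comp
      (continuous_snd.prodMk continuous_fst)
  · intro p
    obtain ⟨j, hj⟩ := p
    revert hj
    induction j using Quot.ind with
    | _ z =>
      intro hz
      show g ⟨jq z, hz⟩ 0 = jq z
      rw [hgev z hz]
      exact kV_zero x₀ z
  · intro p
    obtain ⟨j, hj⟩ := p
    revert hj
    induction j using Quot.ind with
    | _ z =>
      intro hz
      show g ⟨jq z, hz⟩ 1 = jq (x₀, y₀, 0)
      rw [hgev z hz]
      exact kV_one x₀ y₀ z

end ContractionsV

end TopJoinAux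
namespace TopJoinAux

open CategoryTheory FundamentalGroupoid
open scoped FundamentalGroupoid

attribute [local instance] Path.Homotopic.setoid

variable {X Y : Type} [TopologicalSpace X] [TopologicalSpace Y]

lemma half_convex_lt_one {s t : ℝ} (h0 : 0 ≤ s) (h1 : s ≤ 1) (ht1 : t ≤ 1) (ht : t < 1) :
    (1 - s) * (1 / 2) + s * t < 1 := by
  rcases lt_or_eq_of_le h1 with h | h
  · nlinarith [mul_nonneg h0 (sub_nonneg.2 ht1)]
  · rw [← h]; nlinarith

lemma half_convex_pos {s t : ℝ} (h0 : 0 ≤ s) (h1 : s ≤ 1) (ht0 : 0 ≤ t) (ht : 0 < t) :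
    0 < (1 - s) * (1 / 2) + s * t := by
  rcases lt_or_eq_of_le h1 with h | h
  · nlinarith [mul_nonneg h0 ht0]
  · rw [← h]; nlinarith

section Paths

variable [PathConnectedSpace X] [PathConnectedSpace Y]
variable (x₀ : X) (y₀ : Y)

/-- The base point of the join, at height `1/2`. -/
def av : TopJoin X Y := jq (x₀, y₀, ⟨1/2, by norm_num⟩)

lemma av_mem_UU : av x₀ y₀ ∈ UU X Y := by
  show tc (jq (x₀, y₀, ⟨1/2, by norm_num⟩)) < 1
  rw [tc_jq]
  norm_num

lemma av_mem_VV : av x₀ y₀ ∈ VV X Y := by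
  show (0:ℝ) < tc (jq (x₀, y₀, ⟨1/2, by norm_num⟩))
  rw [tc_jq]
  norm_num

/-- The canonical path from the base point to any point of the join,
moving both coordinates along chosen paths while interpolating the height linearly. -/
def pathTo (z : X × Y × I) : Path (av x₀ y₀) (jq z) where
  toFun s := jq ((PathConnectedSpace.somePath x₀ z.1) s, (PathConnectedSpace.somePath y₀ z.2.1) s,
    ⟨(1 - s) * (1 / 2) + s * z.2.2, by
      constructor
      · have := s.2.1; have := s.2.2; have := (z.2.2).2.1
        nlinarith
      · have := s.2.1; have := s.2.2; have := (z.2.2).2.1; have := (z.2.2).2.2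
        nlinarith⟩)
  continuous_toFun := by
    apply continuous_jq.comp
    refine (Path.continuous _).prodMk ((Path.continuous _).prodMk ?_)
    refine Continuous.subtype_mk ?_ _
    fun_prop
  source' := by
    refine jq_congr (Path.source _) (Path.source _) ?_
    show (1 - ((0:I):ℝ)) * (1/2) + ((0:I):ℝ) * z.2.2 = ((⟨1/2, by norm_num⟩ : I) : ℝ)
    have h0 : ((0:I):ℝ) = 0 := rfl
    rw [h0]; norm_num
  target' := by
    refine jq_congr (Path.target _) (Path.target _) ?_
    show (1 - ((1:I):ℝ)) * (1/2) + ((1:I):ℝ) * z.2.2 = (z.2.2 : ℝ)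
    have h1 : ((1:I):ℝ) = 1 := rfl
    rw [h1]; ring

lemma tc_pathTo (z : X × Y × I) (s : I) :
    tc (pathTo x₀ y₀ z s) = (1 - (s:ℝ)) * (1/2) + s * z.2.2 := rfl

lemma joinedIn_UU {w : TopJoin X Y} (hw : w ∈ UU X Y) : JoinedIn (UU X Y) (av x₀ y₀) w := by
  revert hw
  induction w using Quot.ind with
  | _ z =>
    intro hz
    have hz' : (z.2.2 : ℝ) < 1 := hz
    exact ⟨pathTo x₀ y₀ z, fun s => by
      show tc _ < 1
      rw [tc_pathTo]
      exact half_convex_lt_one s.2.1 s.2.2 (z.2.2).2.2 hz'⟩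

lemma joinedIn_VV {w : TopJoin X Y} (hw : w ∈ VV X Y) : JoinedIn (VV X Y) (av x₀ y₀) w := by
  revert hw
  induction w using Quot.ind with
  | _ z =>
    intro hz
    have hz' : (0:ℝ) < z.2.2 := hz
    exact ⟨pathTo x₀ y₀ z, fun s => by
      show (0:ℝ) < tc _
      rw [tc_pathTo]
      exact half_convex_pos s.2.1 s.2.2 (z.2.2).2.1 hz'⟩

lemma joinedIn_UV {w : TopJoin X Y} (hw : w ∈ UU X Y ∩ VV X Y) :
    JoinedIn (UU X Y ∩ VV X Y) (av x₀ y₀) w := by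
  revert hw
  induction w using Quot.ind with
  | _ z =>
    intro hz
    have hz1 : (z.2.2 : ℝ) < 1 := hz.1
    have hz2 : (0:ℝ) < z.2.2 := hz.2
    exact ⟨pathTo x₀ y₀ z, fun s => by
      constructor
      · show tc _ < 1
        rw [tc_pathTo]
        exact half_convex_lt_one s.2.1 s.2.2 (z.2.2).2.2 hz1
      · show (0:ℝ) < tc _
        rw [tc_pathTo]
        exact half_convex_pos s.2.1 s.2.2 (z.2.2).2.1 hz2⟩

lemma joined_av (w : TopJoin X Y) : Joined (av x₀ y₀) w := by
  induction w using Quot.ind with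
  | _ z => exact ⟨pathTo x₀ y₀ z⟩

include x₀ y₀ in
lemma pathConnectedSpace_topJoin : PathConnectedSpace (TopJoin X Y) := by
  refine ⟨⟨av x₀ y₀⟩, fun u v => ?_⟩
  exact (joined_av x₀ y₀ u).symm.trans (joined_av x₀ y₀ v)

end Paths

end TopJoinAux
namespace TopJoinAux

open CategoryTheory FundamentalGroupoid
open scoped FundamentalGroupoid

attribute [local instance] Path.Homotopic.setoid

section Seg

variable {A : Type*} [TopologicalSpace A] {x y : A}

lemma comb_mem (u r s : I) : (1 - (u:ℝ)) * r + u * s ∈ Set.Icc (0:ℝ) 1 := by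
  constructor
  · have := u.2.1; have := u.2.2; have := r.2.1; have := s.2.1
    nlinarith
  · have := u.2.1; have := u.2.2; have := r.2.1; have := r.2.2; have := s.2.1; have := s.2.2
    nlinarith

/-- The affine sub-segment of a path between parameters `r` and `s`, with specified endpoints. -/
def seg (P : Path x y) (r s : I) {w z : A} (hw : P r = w) (hz : P s = z) : Path w z where
  toFun u := P ⟨(1 - (u:ℝ)) * r + u * s, comb_mem u r s⟩
  continuous_toFun := by
    apply P.continuous.comp
    refine Continuous.subtype_mk ?_ _
    fun_prop
  source' := by
    rw [← hw]
    refine congrArg P (Subtype.ext ?_)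
    show (1 - ((0:I):ℝ)) * r + ((0:I):ℝ) * s = (r:ℝ)
    have h0 : ((0:I):ℝ) = 0 := rfl
    rw [h0]; ring
  target' := by
    rw [← hz]
    refine congrArg P (Subtype.ext ?_)
    show (1 - ((1:I):ℝ)) * r + ((1:I):ℝ) * s = (s:ℝ)
    have h1 : ((1:I):ℝ) = 1 := rfl
    rw [h1]; ring

lemma seg_apply (P : Path x y) (r s : I) {w z : A} (hw : P r = w) (hz : P s = z) (u : I) :
    seg P r s hw hz u = P ⟨(1 - (u:ℝ)) * r + u * s, comb_mem u r s⟩ := rfl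

/-- Splitting a sub-segment of a path at an intermediate parameter gives homotopic paths. -/
lemma seg_split (P : Path x y) (r₁ r₂ r₃ : I) (v : I)
    (hv : (r₂ : ℝ) = (1 - (v:ℝ)) * r₁ + v * r₃) {w₁ w₂ w₃ : A}
    (h1 : P r₁ = w₁) (h2 : P r₂ = w₂) (h3 : P r₃ = w₃) :
    Path.Homotopic (seg P r₁ r₃ h1 h3) ((seg P r₁ r₂ h1 h2).trans (seg P r₂ r₃ h2 h3)) := by
  have hf0aux : ∀ t : I, (if (t:ℝ) ≤ 1/2 then 2 * (t:ℝ) * v else (2 - 2 * t) * v + (2 * t - 1))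
      ∈ Set.Icc (0:ℝ) 1 := by
    intro t
    have ht0 := t.2.1; have ht1 := t.2.2; have hv0 := v.2.1; have hv1 := v.2.2
    split_ifs with h
    · constructor
      · positivity
      · nlinarith
    · push_neg at h
      constructor
      · nlinarith
      · nlinarith
  set f : I → I := fun t => ⟨_, hf0aux t⟩ with hfdef
  have hf : Continuous f := by
    refine Continuous.subtype_mk ?_ _
    refine Continuous.if_le ?_ ?_ (by fun_prop) continuous_const ?_
    · fun_prop
    · fun_prop
    · intro t ht
      rw [ht]; ring
  have hf0 : f 0 = 0 := by
    refine Subtype.ext ?_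
    show (if ((0:I):ℝ) ≤ 1/2 then _ else _) = ((0:I):ℝ)
    have h0 : ((0:I):ℝ) = 0 := rfl
    rw [h0, if_pos (by norm_num)]
    ring
  have hf1 : f 1 = 1 := by
    refine Subtype.ext ?_
    show (if ((1:I):ℝ) ≤ 1/2 then _ else _) = ((1:I):ℝ)
    have h1 : ((1:I):ℝ) = 1 := rfl
    rw [h1, if_neg (by norm_num)]
    ring
  have key : (seg P r₁ r₃ h1 h3).reparam f hf hf0 hf1 =
      (seg P r₁ r₂ h1 h2).trans (seg P r₂ r₃ h2 h3) := by
    ext t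
    show (seg P r₁ r₃ h1 h3) (f t) = ((seg P r₁ r₂ h1 h2).trans (seg P r₂ r₃ h2 h3)) t
    rw [Path.trans_apply]
    split_ifs with h
    · rw [seg_apply, seg_apply]
      refine congrArg P (Subtype.ext ?_)
      show (1 - (f t : ℝ)) * r₁ + (f t : ℝ) * r₃ = (1 - 2 * (t:ℝ)) * r₁ + (2 * t) * r₂
      have hft : (f t : ℝ) = 2 * (t:ℝ) * v := by
        show (if (t:ℝ) ≤ 1/2 then _ else _) = _
        rw [if_pos h]
      rw [hft, hv]; ring
    · rw [seg_apply, seg_apply]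
      refine congrArg P (Subtype.ext ?_)
      show (1 - (f t : ℝ)) * r₁ + (f t : ℝ) * r₃ =
        (1 - (2 * (t:ℝ) - 1)) * r₂ + (2 * (t:ℝ) - 1) * r₃
      have hft : (f t : ℝ) = (2 - 2 * (t:ℝ)) * v + (2 * (t:ℝ) - 1) := by
        show (if (t:ℝ) ≤ 1/2 then _ else _) = _
        rw [if_neg h]
      rw [hft, hv]; ring
  exact key ▸ ⟨Path.Homotopy.reparam _ f hf hf0 hf1⟩

end Seg

end TopJoinAux
namespace TopJoinAux

open CategoryTheory FundamentalGroupoid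
open scoped FundamentalGroupoid

attribute [local instance] Path.Homotopic.setoid

section Null

/-- Composition of path classes as morphisms of the fundamental groupoid. -/
lemma hom_comp_lift {A : Type*} [TopologicalSpace A] {x y z : A} (p : Path x y) (q : Path y z) :
    (⟦p.trans q⟧ : FundamentalGroupoid.mk x ⟶ FundamentalGroupoid.mk z) =
      ((⟦p⟧ : FundamentalGroupoid.mk x ⟶ FundamentalGroupoid.mk y) ≫
        (⟦q⟧ : FundamentalGroupoid.mk y ⟶ FundamentalGroupoid.mk z) :
          FundamentalGroupoid.mk x ⟶ FundamentalGroupoid.mk z) :=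
  Path.Homotopic.Quotient.mk_trans p q

lemma hom_symm_inv {A : Type*} [TopologicalSpace A] {x y : A} (p : Path x y) :
    (⟦p.symm⟧ : FundamentalGroupoid.mk y ⟶ FundamentalGroupoid.mk x) =
      (Groupoid.inv (⟦p⟧ : FundamentalGroupoid.mk x ⟶ FundamentalGroupoid.mk y) :
        FundamentalGroupoid.mk y ⟶ FundamentalGroupoid.mk x) := rfl

/-- A loop whose image lies in a subset that contracts (in the ambient space) is
null-homotopic. -/
lemma loop_null {A : Type} [TopologicalSpace A] {W : Set A} {c : A}
    (K : ContinuousMap.Homotopy (⟨Subtype.val, continuous_subtype_val⟩ : C(W, A))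
      (ContinuousMap.const _ c))
    {b : A} (hb : b ∈ W) (lp : Path b b) (hr : ∀ s, lp s ∈ W) :
    Path.Homotopic lp (Path.refl b) := by
  let TA : TopCat := TopCat.of A
  let TW : TopCat := TopCat.of W
  let f : C(TW, TA) := ⟨Subtype.val, continuous_subtype_val⟩
  let g : C(TW, TA) := ContinuousMap.const _ c
  let K' : ContinuousMap.Homotopy f g := K
  let bW : TW := ⟨b, hb⟩
  let lpW : Path bW bW :=
    ⟨⟨fun s => ⟨lp s, hr s⟩, Continuous.subtype_mk lp.continuous _⟩,
      Subtype.ext lp.source, Subtype.ext lp.target⟩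
  have nt : NatTrans (πₘ (TopCat.ofHom f)) (πₘ (TopCat.ofHom g)) := FundamentalGroupoidFunctor.homotopicMapsNatIso K'
  have hnat := nt.naturality (X := fromTop (X := TW) bW) (Y := fromTop (X := TW) bW)
    (⟦lpW⟧ : fromTop (X := TW) bW ⟶ fromTop (X := TW) bW)
  have hf : (πₘ (TopCat.ofHom f)).map (⟦lpW⟧ : fromTop (X := TW) bW ⟶ fromTop (X := TW) bW) =
      (⟦lp⟧ : fromTop (X := TA) b ⟶ fromTop (X := TA) b) := by
    rfl
  have hg : (πₘ (TopCat.ofHom g)).map (⟦lpW⟧ : fromTop (X := TW) bW ⟶ fromTop (X := TW) bW) =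
      𝟙 (fromTop (X := TA) c) := by
    rfl
  rw [hf, hg] at hnat
  have e3 : (⟦lp⟧ : fromTop (X := TA) b ⟶ fromTop (X := TA) b) = ⟦Path.refl b⟧ :=
    (cancel_mono (nt.app (fromTop (X := TW) bW))).mp
      (hnat.trans ((Category.comp_id _).trans (Category.id_comp _).symm))
  exact Quotient.exact e3

end Null

end TopJoinAux
namespace TopJoinAux

open CategoryTheory FundamentalGroupoid
open scoped FundamentalGroupoid

attribute [local instance] Path.Homotopic.setoid

variable {X Y : Type} [TopologicalSpace X] [TopologicalSpace Y]
variable [PathConnectedSpace X] [PathConnectedSpace Y]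

/-- Every loop in the join based at the midpoint is null-homotopic. -/
lemma loops_null (x₀ : X) (y₀ : Y) : ∀ lp : Path (av x₀ y₀) (av x₀ y₀),
    Path.Homotopic lp (Path.refl (av x₀ y₀)) := by
  classical
  set a := av x₀ y₀ with ha
  intro lp
  -- Lebesgue number for the cover of I by the preimages of UU and VV
  obtain ⟨δ, hδ0, hLb⟩ := lebesgue_number_lemma_of_metric (s := (Set.univ : Set I))
    (c := fun b : Bool => lp ⁻¹' (if b then UU X Y else VV X Y)) isCompact_univ
    (fun b => by
      cases b
      · simpa using isOpen_VV.preimage lp.continuous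
      · simpa using isOpen_UU.preimage lp.continuous)
    (by
      intro s _
      rcases mem_UU_or_VV (lp s) with h | h
      · exact Set.mem_iUnion.2 ⟨true, by simpa using h⟩
      · exact Set.mem_iUnion.2 ⟨false, by simpa using h⟩)
  obtain ⟨N0, hN0⟩ := exists_nat_one_div_lt hδ0
  set n : ℕ := N0 + 1 with hn
  have hnpos : 0 < n := Nat.succ_pos _
  have hn' : (0:ℝ) < n := by exact_mod_cast hnpos
  have hstep : 1/(n:ℝ) < δ := by
    rw [hn]
    push_cast
    exact hN0
  -- colors of the subintervals
  have hcol : ∀ k : ℕ, ∃ b : Bool, ∀ s : I,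
      (s:ℝ) ∈ Set.Icc ((k:ℝ)/n) (((k:ℝ)+1)/n) → k < n →
      lp s ∈ (if b then UU X Y else VV X Y) := by
    intro k
    by_cases hk : k < n
    · have hmem : ((k:ℝ)/n) ∈ Set.Icc (0:ℝ) 1 := ⟨by positivity, by
        rw [div_le_one hn']; exact_mod_cast hk.le⟩
      obtain ⟨b, hb⟩ := hLb ⟨(k:ℝ)/n, hmem⟩ trivial
      refine ⟨b, fun s hs _ => hb ?_⟩
      show dist s (⟨(k:ℝ)/n, hmem⟩ : I) < δ
      rw [Subtype.dist_eq, Real.dist_eq, abs_lt]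
      have h1 := hs.1; have h2 := hs.2
      have he : ((k:ℝ)+1)/n = (k:ℝ)/n + 1/n := by ring
      rw [he] at h2
      constructor
      · nlinarith
      · nlinarith
    · exact ⟨true, fun s _ h => absurd h hk⟩
  choose bW hbW using hcol
  set W : ℕ → Set (TopJoin X Y) := fun k => if bW k then UU X Y else VV X Y with hWdef
  have hWor : ∀ k, W k = UU X Y ∨ W k = VV X Y := fun k => by
    by_cases h : bW k
    · left; simp [hWdef, h]
    · right; simp [hWdef, h]
  have hWmem : ∀ k, k < n → ∀ s : I, (s:ℝ) ∈ Set.Icc ((k:ℝ)/n) (((k:ℝ)+1)/n) →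
      lp s ∈ W k := fun k hk s hs => hbW k s hs hk
  have haW : ∀ k, a ∈ W k := fun k => by
    rcases hWor k with h | h
    · rw [h]; exact av_mem_UU x₀ y₀
    · rw [h]; exact av_mem_VV x₀ y₀
  -- the subdivision points
  have hτmem : ∀ k : ℕ, min ((k:ℝ)/n) 1 ∈ Set.Icc (0:ℝ) 1 :=
    fun k => ⟨le_min (by positivity) zero_le_one, min_le_right _ _⟩
  set τ : ℕ → I := fun k => ⟨min ((k:ℝ)/n) 1, hτmem k⟩ with hτdef
  have hτ : ∀ k, k ≤ n → (τ k : ℝ) = (k:ℝ)/n := fun k hk => min_eq_left (by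
    rw [div_le_one hn']; exact_mod_cast hk)
  have hτn1 : τ n = 1 := Subtype.ext (by
    show min ((n:ℝ)/n) 1 = ((1:I):ℝ)
    rw [div_self (ne_of_gt hn')]
    simp)
  have hτna : lp (τ n) = a := by rw [hτn1]; exact lp.target
  -- contractions of the two open sets
  obtain ⟨KU⟩ := exists_contraction_U x₀ y₀
  obtain ⟨KV⟩ := exists_contraction_V x₀ y₀
  have hnull : ∀ k, ∀ c : Path a a, (∀ s, c s ∈ W k) →
      Path.Homotopic c (Path.refl a) := by
    intro k c hc
    rcases hWor k with h | h
    · exact loop_null KU (by rw [← h]; exact haW k) c (fun s => by rw [← h]; exact hc s)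
    · exact loop_null KV (by rw [← h]; exact haW k) c (fun s => by rw [← h]; exact hc s)
  -- the main induction
  have main : ∀ k, k ≤ n → ∀ (z : TopJoin X Y) (hz : lp (τ k) = z),
      ∃ c : Path a z, (∀ j, j < n → (j = k ∨ j + 1 = k) → ∀ s, c s ∈ W j) ∧
        (⟦seg lp 0 (τ k) lp.source hz⟧ : Path.Homotopic.Quotient a z) = ⟦c⟧ := by
    intro k
    induction k with
    | zero =>
      intro _ z hz
      have hτ0 : (τ 0 : ℝ) = ((0:I):ℝ) := by
        show min (((0:ℕ):ℝ)/n) 1 = ((0:I):ℝ)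
        have h0 : ((0:I):ℝ) = 0 := rfl
        rw [h0]
        push_cast
        rw [zero_div]
        simp
      have hz0 : z = a := by
        rw [← hz, show τ 0 = 0 from Subtype.ext hτ0, lp.source]
      subst hz0
      refine ⟨Path.refl a, fun j _ _ s => haW j, ?_⟩
      have hseg0 : seg lp 0 (τ 0) lp.source hz = Path.refl a := by
        ext u
        show lp ⟨(1-(u:ℝ)) * ((0:I):ℝ) + u * (τ 0 : ℝ), _⟩ = a
        have hpt : (⟨(1-(u:ℝ)) * ((0:I):ℝ) + u * (τ 0 : ℝ), comb_mem u 0 (τ 0)⟩ : I) = 0 :=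
          Subtype.ext (by
            show (1-(u:ℝ)) * ((0:I):ℝ) + u * (τ 0 : ℝ) = ((0:I):ℝ)
            have h0 : ((0:I):ℝ) = 0 := rfl
            rw [hτ0, h0]; ring)
        rw [hpt, lp.source]
      rw [hseg0]
    | succ k ih =>
      intro hk1 z hz
      have hk : k < n := hk1
      obtain ⟨c₁, hc₁, hq₁⟩ := ih (Nat.le_of_succ_le hk1) (lp (τ k)) rfl
      have hτk : (τ k : ℝ) = (k:ℝ)/n := hτ k (Nat.le_of_succ_le hk1)
      have hτk1 : (τ (k+1) : ℝ) = ((k:ℝ)+1)/n := by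
        have h := hτ (k+1) hk1
        exact_mod_cast h
      have hz1 : z ∈ W k := by
        rw [← hz]
        refine hWmem k hk (τ (k+1)) ?_
        rw [hτk1]
        exact ⟨(div_le_div_iff_of_pos_right hn').mpr (by linarith), le_rfl⟩
      -- the middle segment lies in W k
      set p2 : Path (lp (τ k)) z := seg lp (τ k) (τ (k+1)) rfl hz with hp2def
      have hp2 : ∀ u, p2 u ∈ W k := by
        intro u
        have hu0 := u.2.1; have hu1 := u.2.2
        refine hWmem k hk _ ?_
        show (1 - (u:ℝ)) * (τ k) + u * (τ (k+1)) ∈ Set.Icc ((k:ℝ)/n) (((k:ℝ)+1)/n)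
        rw [hτk, hτk1]
        have hA : ((k:ℝ)+1)/n = (k:ℝ)/n + 1/n := by ring
        rw [hA]
        have h1n : (0:ℝ) ≤ 1/(n:ℝ) := by positivity
        constructor
        · nlinarith [mul_nonneg hu0 h1n]
        · nlinarith [mul_nonneg (by linarith : (0:ℝ) ≤ 1 - (u:ℝ)) h1n]
      -- choose the new connecting path
      have hc₂ex : ∃ c₂ : Path a z, (∀ s, c₂ s ∈ W k) ∧
          (k + 1 < n → ∀ s, c₂ s ∈ W (k+1)) := by
        by_cases h2 : k + 1 < n
        · have hz2 : z ∈ W (k+1) := by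
            rw [← hz]
            refine hWmem (k+1) h2 (τ (k+1)) ?_
            have hA : (((k+1:ℕ)):ℝ) = (k:ℝ)+1 := by push_cast; ring
            rw [hA, hτk1]
            exact ⟨le_rfl, (div_le_div_iff_of_pos_right hn').mpr (by linarith)⟩
          rcases hWor k with hU | hV <;> rcases hWor (k+1) with hU' | hV'
          · obtain ⟨c, hc⟩ := joinedIn_UU x₀ y₀ (show z ∈ UU X Y by rw [← hU]; exact hz1)
            exact ⟨c, fun s => by rw [hU]; exact hc s, fun _ s => by rw [hU']; exact hc s⟩
          · obtain ⟨c, hc⟩ := joinedIn_UV x₀ y₀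
              ⟨by rw [← hU]; exact hz1, by rw [← hV']; exact hz2⟩
            exact ⟨c, fun s => by rw [hU]; exact (hc s).1, fun _ s => by rw [hV']; exact (hc s).2⟩
          · obtain ⟨c, hc⟩ := joinedIn_UV x₀ y₀
              ⟨by rw [← hU']; exact hz2, by rw [← hV]; exact hz1⟩
            exact ⟨c, fun s => by rw [hV]; exact (hc s).2, fun _ s => by rw [hU']; exact (hc s).1⟩
          · obtain ⟨c, hc⟩ := joinedIn_VV x₀ y₀ (show z ∈ VV X Y by rw [← hV]; exact hz1)
            exact ⟨c, fun s => by rw [hV]; exact hc s, fun _ s => by rw [hV']; exact hc s⟩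
        · rcases hWor k with hU | hV
          · obtain ⟨c, hc⟩ := joinedIn_UU x₀ y₀ (show z ∈ UU X Y by rw [← hU]; exact hz1)
            exact ⟨c, fun s => by rw [hU]; exact hc s, fun h => absurd h h2⟩
          · obtain ⟨c, hc⟩ := joinedIn_VV x₀ y₀ (show z ∈ VV X Y by rw [← hV]; exact hz1)
            exact ⟨c, fun s => by rw [hV]; exact hc s, fun h => absurd h h2⟩
      obtain ⟨c₂, hc₂a, hc₂b⟩ := hc₂ex
      refine ⟨c₂, ?_, ?_⟩
      · intro j hj hjk s
        rcases hjk with hjk | hjk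
        · subst hjk
          exact hc₂b hj s
        · have hjq : j = k := by omega
          subst hjq
          exact hc₂a s
      · -- homotopy class computation
        have hvmem : (k:ℝ)/((k:ℝ)+1) ∈ Set.Icc (0:ℝ) 1 := by
          constructor
          · positivity
          · rw [div_le_one (by positivity)]; linarith
        set vv : I := ⟨(k:ℝ)/((k:ℝ)+1), hvmem⟩ with hvv
        have hv : (τ k : ℝ) = (1 - (vv:ℝ)) * ((0:I):ℝ) + vv * (τ (k+1)) := by
          show (τ k : ℝ) = (1 - (k:ℝ)/((k:ℝ)+1)) * ((0:I):ℝ) + ((k:ℝ)/((k:ℝ)+1)) * (τ (k+1))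
          rw [hτk, hτk1]
          have h0 : ((0:I):ℝ) = 0 := rfl
          rw [h0]
          have hkpos : ((k:ℝ)+1) ≠ 0 := by positivity
          field_simp
          ring
        have hsplit := seg_split lp 0 (τ k) (τ (k+1)) vv hv lp.source rfl hz
        set lam : Path a a := c₁.trans (p2.trans c₂.symm) with hlam
        have hlamW : ∀ s, lam s ∈ W k := by
          have hr : Set.range lam ⊆ W k := by
            rw [hlam, Path.trans_range, Path.trans_range, Path.symm_range]
            refine Set.union_subset ?_ (Set.union_subset ?_ ?_)
            · rintro _ ⟨s, rfl⟩; exact hc₁ k hk (Or.inl rfl) s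
            · rintro _ ⟨s, rfl⟩; exact hp2 s
            · rintro _ ⟨s, rfl⟩; exact hc₂a s
          exact fun s => hr (Set.mem_range_self s)
        have hlam0 : Path.Homotopic lam (Path.refl a) := hnull k lam hlamW
        have e0 : (⟦seg lp 0 (τ (k+1)) lp.source hz⟧ :
            FundamentalGroupoid.mk a ⟶ FundamentalGroupoid.mk z) =
            ⟦(seg lp 0 (τ k) lp.source rfl).trans p2⟧ := Quotient.sound hsplit
        have e1 : (⟦(seg lp 0 (τ k) lp.source rfl).trans p2⟧ :
            FundamentalGroupoid.mk a ⟶ FundamentalGroupoid.mk z) =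
            ((⟦c₁⟧ : FundamentalGroupoid.mk a ⟶ FundamentalGroupoid.mk (lp (τ k))) ≫
              (⟦p2⟧ : FundamentalGroupoid.mk (lp (τ k)) ⟶ FundamentalGroupoid.mk z) :
                FundamentalGroupoid.mk a ⟶ FundamentalGroupoid.mk z) := by
          rw [hom_comp_lift, hq₁]
        have e2 : (⟦lam⟧ : FundamentalGroupoid.mk a ⟶ FundamentalGroupoid.mk a) =
            ((((⟦c₁⟧ : FundamentalGroupoid.mk a ⟶ FundamentalGroupoid.mk (lp (τ k))) ≫
              (⟦p2⟧ : FundamentalGroupoid.mk (lp (τ k)) ⟶ FundamentalGroupoid.mk z) :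
                FundamentalGroupoid.mk a ⟶ FundamentalGroupoid.mk z)) ≫
              Groupoid.inv (⟦c₂⟧ : FundamentalGroupoid.mk a ⟶ FundamentalGroupoid.mk z) :
                FundamentalGroupoid.mk a ⟶ FundamentalGroupoid.mk a) := by
          rw [hlam, hom_comp_lift, hom_comp_lift, hom_symm_inv]
          exact (Category.assoc _ _ _).symm
        have e3 : (⟦lam⟧ : FundamentalGroupoid.mk a ⟶ FundamentalGroupoid.mk a) =
            𝟙 (FundamentalGroupoid.mk a) :=
          (Quotient.sound hlam0).trans (FundamentalGroupoid.id_eq_path_refl _).symm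
        have e4 : ((⟦c₁⟧ : FundamentalGroupoid.mk a ⟶ FundamentalGroupoid.mk (lp (τ k))) ≫
            (⟦p2⟧ : FundamentalGroupoid.mk (lp (τ k)) ⟶ FundamentalGroupoid.mk z) :
              FundamentalGroupoid.mk a ⟶ FundamentalGroupoid.mk z) =
            (⟦c₂⟧ : FundamentalGroupoid.mk a ⟶ FundamentalGroupoid.mk z) := by
          have e5 := congrArg (fun m => m ≫
            (⟦c₂⟧ : FundamentalGroupoid.mk a ⟶ FundamentalGroupoid.mk z)) (e2.symm.trans e3)
          exact (Category.comp_id _).symm.trans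
            ((congrArg (CategoryStruct.comp _) (Groupoid.inv_comp _).symm).trans
              ((Category.assoc _ _ _).symm.trans (e5.trans (Category.id_comp _))))
        exact e0.trans (e1.trans e4)
  -- conclude
  obtain ⟨cN, hcN, hqN⟩ := main n le_rfl a hτna
  have hcNW : ∀ s, cN s ∈ W (n-1) := by
    intro s
    refine hcN (n-1) (Nat.sub_lt hnpos one_pos) (Or.inr ?_) s
    omega
  have hlpseg : Path.Homotopic lp (seg lp 0 (τ n) lp.source hτna) := by
    have hfmem : ∀ u : I, (1 - (u:ℝ)) * ((0:I):ℝ) + u * ((τ n : I):ℝ) ∈ Set.Icc (0:ℝ) 1 :=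
      fun u => comb_mem u 0 (τ n)
    set f : I → I := fun u => ⟨(1 - (u:ℝ)) * ((0:I):ℝ) + u * ((τ n : I):ℝ), hfmem u⟩ with hf
    have hfc : Continuous f := by
      refine Continuous.subtype_mk ?_ _
      fun_prop
    have hf0 : f 0 = 0 := Subtype.ext (by
      show (1 - ((0:I):ℝ)) * ((0:I):ℝ) + ((0:I):ℝ) * ((τ n : I):ℝ) = ((0:I):ℝ)
      have h0 : ((0:I):ℝ) = 0 := rfl
      rw [h0]; ring)
    have hf1 : f 1 = 1 := Subtype.ext (by
      show (1 - ((1:I):ℝ)) * ((0:I):ℝ) + ((1:I):ℝ) * ((τ n : I):ℝ) = ((1:I):ℝ)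
      rw [hτn1]
      have h1 : ((1:I):ℝ) = 1 := rfl
      have h0 : ((0:I):ℝ) = 0 := rfl
      rw [h1, h0]; ring)
    have hre : lp.reparam f hfc hf0 hf1 = seg lp 0 (τ n) lp.source hτna := by
      ext u
      rfl
    exact hre ▸ ⟨Path.Homotopy.reparam lp f hfc hf0 hf1⟩
  have hfin : (⟦lp⟧ : Path.Homotopic.Quotient a a) = ⟦Path.refl a⟧ :=
    ((Quotient.sound hlpseg).trans hqN).trans (Quotient.sound (hnull (n-1) cN hcNW))
  exact Quotient.exact hfin

end TopJoinAux
namespace TopJoinAux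

open CategoryTheory FundamentalGroupoid
open scoped FundamentalGroupoid

attribute [local instance] Path.Homotopic.setoid

variable {X Y : Type} [TopologicalSpace X] [TopologicalSpace Y]
variable [PathConnectedSpace X] [PathConnectedSpace Y]

lemma paths_homotopic (x₀ : X) (y₀ : Y) {u v : TopJoin X Y} (p q : Path u v) :
    Path.Homotopic p q := by
  classical
  set a := av x₀ y₀ with ha
  obtain ⟨d⟩ : Joined a u := joined_av x₀ y₀ u
  set lam : Path a a := d.trans ((p.trans q.symm).trans d.symm) with hlam
  have h0 : Path.Homotopic lam (Path.refl a) := loops_null x₀ y₀ lam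
  have e : (⟦lam⟧ : FundamentalGroupoid.mk a ⟶ FundamentalGroupoid.mk a) =
      𝟙 (FundamentalGroupoid.mk a) :=
    (Quotient.sound h0).trans (FundamentalGroupoid.id_eq_path_refl _).symm
  have e2 : (⟦lam⟧ : FundamentalGroupoid.mk a ⟶ FundamentalGroupoid.mk a) =
      (((⟦d⟧ : FundamentalGroupoid.mk a ⟶ FundamentalGroupoid.mk u) ≫
        ((((⟦p⟧ : FundamentalGroupoid.mk u ⟶ FundamentalGroupoid.mk v) ≫
          Groupoid.inv (⟦q⟧ : FundamentalGroupoid.mk u ⟶ FundamentalGroupoid.mk v) :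
            FundamentalGroupoid.mk u ⟶ FundamentalGroupoid.mk u)) ≫
          Groupoid.inv (⟦d⟧ : FundamentalGroupoid.mk a ⟶ FundamentalGroupoid.mk u) :
            FundamentalGroupoid.mk u ⟶ FundamentalGroupoid.mk a)) :
        FundamentalGroupoid.mk a ⟶ FundamentalGroupoid.mk a) := by
    rw [hlam, hom_comp_lift, hom_comp_lift, hom_comp_lift, hom_symm_inv, hom_symm_inv]
  have E := e2.symm.trans e
  have key : ∀ {P Q : FundamentalGroupoid (TopJoin X Y)} (x y : P ⟶ Q),
      x ≫ Groupoid.inv y = 𝟙 P → x = y := fun x y h =>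
    (Category.comp_id x).symm.trans
      ((congrArg (CategoryStruct.comp x) (Groupoid.inv_comp y).symm).trans
        ((Category.assoc _ _ _).symm.trans ((congrArg (· ≫ y) h).trans (Category.id_comp y))))
  have E2 := key _ _ ((Category.assoc _ _ _).trans E)
  have key2 : ∀ {P Q : FundamentalGroupoid (TopJoin X Y)} (x : P ⟶ Q) (A : Q ⟶ Q),
      x ≫ A = x → A = 𝟙 Q := fun x A h =>
    (Category.id_comp A).symm.trans
      ((congrArg (· ≫ A) (Groupoid.inv_comp x).symm).trans
        ((Category.assoc _ _ _).trans
          ((congrArg (CategoryStruct.comp (Groupoid.inv x)) h).trans (Groupoid.inv_comp x))))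
  have E3 := key2 _ _ E2
  exact Quotient.exact (key _ _ E3)

end TopJoinAux

open TopJoinAux in
/-- The join of two nonempty path-connected compact spaces is simply connected. -/
theorem topJoin_simplyConnected (X Y : Type) [TopologicalSpace X] [TopologicalSpace Y]
    [CompactSpace X] [CompactSpace Y] [Nonempty X] [Nonempty Y]
    [PathConnectedSpace X] [PathConnectedSpace Y] :
    SimplyConnectedSpace (TopJoin X Y) := by
  classical
  have x₀ : X := Classical.arbitrary X
  have y₀ : Y := Classical.arbitrary Y
  rw [simply_connected_iff_paths_homotopic]
  refine ⟨pathConnectedSpace_topJoin x₀ y₀, fun u v => ?_⟩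
  constructor
  intro P Q
  refine Quotient.inductionOn₂ P Q fun p q => ?_
  exact Quotient.sound (paths_homotopic x₀ y₀ p q)
end
end
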